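/- Let L be a just-infinite ℤ_p-Lie lattice with dim_{ℤ_p}(L) ≥ 2, and let k ∈ ℕ. Assume that every ℤ_p-submodule M of L of index p^k satisfies [M,M] = [L,L] (where [M,M] is the set of finite sums of brackets of elements of M). Then for every m ∈ ℕ, the ℤ_p-Lie lattice p^m·L is not self-similar of index p^k. -/

import Mathlib

/-- Let `L` be a just-infinite `ℤ_p`-Lie lattice (nonzero, with every
nonzero ideal of finite additive index, i.e. of full rank) of dimension at least `2`, and
let `k ∈ ℕ`.  Assume that every `ℤ_p`-submodule `M` of `L` of additive index `p^k` satisfies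
`[M,M] = [L,L]` (the `ℤ_p`-spans of the sets of brackets, i.e. the sets of finite sums of
brackets, coincide).  Then for every `m ∈ ℕ` the `ℤ_p`-Lie lattice `p^m · L` is not
self-similar of index `p^k`: it admits no simple virtual endomorphism of index `p^k`. -/
theorem stmt_15 (p : ℕ) [Fact (Nat.Prime p)]
    (L : Type) [LieRing L] [LieAlgebra ℤ_[p] L]
    [Module.Free ℤ_[p] L] [Module.Finite ℤ_[p] L]
    -- `L` is just infinite:
    (hJI : Nontrivial L ∧ ∀ I : LieIdeal ℤ_[p] L, I ≠ ⊥ →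
      Module.finrank ℤ_[p] I.toSubmodule = Module.finrank ℤ_[p] L)
    (hdim : 2 ≤ Module.finrank ℤ_[p] L)
    (k : ℕ)
    -- every `ℤ_p`-submodule of index `p^k` has the same derived span as `L`:
    (hMM : ∀ M : Submodule ℤ_[p] L, M.toAddSubgroup.index = p ^ k →
      Submodule.span ℤ_[p] {z : L | ∃ x ∈ M, ∃ y ∈ M, z = ⁅x, y⁆} =
        Submodule.span ℤ_[p] {z : L | ∃ x y : L, z = ⁅x, y⁆}) :
    -- then `p^m · L` is not self-similar of index `p^k`, for every `m`:
    ∀ (m : ℕ) (L₀ : Submodule ℤ_[p] L),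
      (L₀ : Set L) = {x : L | ∃ y : L, x = ((p : ℤ_[p]) ^ m) • y} →
      ¬ ∃ (M : Submodule ℤ_[p] L) (φ : M →ₗ[ℤ_[p]] L),
        M ≤ L₀ ∧ (∀ x ∈ M, ∀ y ∈ M, ⁅x, y⁆ ∈ M) ∧
        AddSubgroup.relIndex M.toAddSubgroup L₀.toAddSubgroup = p ^ k ∧
        (∀ x : M, φ x ∈ L₀) ∧
        (∀ (x y : M) (h : ⁅(x : L), (y : L)⁆ ∈ M), φ ⟨⁅(x : L), (y : L)⁆, h⟩ = ⁅φ x, φ y⁆) ∧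
        (∀ I : Submodule ℤ_[p] L, I ≤ L₀ → (∀ a ∈ L₀, ∀ b ∈ I, ⁅a, b⁆ ∈ I) → I ≠ ⊥ →
          ¬ (I ≤ M ∧ ∀ x : M, (x : L) ∈ I → φ x ∈ I)) := by
  obtain ⟨hnt, hJI⟩ := hJI
  have hp : (p : ℤ_[p]) ≠ 0 := by
    exact_mod_cast (Fact.out : Nat.Prime p).ne_zero
  -- `L` is not abelian
  have habel : ∃ x y : L, ⁅x, y⁆ ≠ 0 := by
    by_contra h
    push_neg at h
    obtain ⟨x₀, hx₀⟩ := exists_ne (0 : L)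
    let J : LieIdeal ℤ_[p] L :=
      { toSubmodule := Submodule.span ℤ_[p] {x₀}
        lie_mem := fun {x z} _ => by
          rw [h x z]
          exact (Submodule.span ℤ_[p] {x₀}).zero_mem }
    have hJne : J ≠ ⊥ := by
      intro hJ
      have hx : x₀ ∈ J := Submodule.subset_span rfl
      rw [hJ] at hx
      exact hx₀ hx
    have heq := hJI J hJne
    have hr : Module.rank ℤ_[p] J.toSubmodule ≤ 1 := by
      have := rank_span_le (R := ℤ_[p]) ({x₀} : Set L)
      simpa using this
    have hfr : Module.finrank ℤ_[p] J.toSubmodule ≤ 1 := by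
      have := Cardinal.toNat_le_toNat hr Cardinal.one_lt_aleph0
      simpa [Module.finrank] using this
    rw [heq] at hfr
    omega
  obtain ⟨x₁, y₁, hbr⟩ := habel
  intro m L₀ hL₀
  rintro ⟨M, φ, hML, hMbr, hidx, hφL, hφbr, hsimple⟩
  set c : ℤ_[p] := (p : ℤ_[p]) ^ m with hc_def
  have hc : c ≠ 0 := pow_ne_zero _ hp
  have hcc : c * c ≠ 0 := mul_ne_zero hc hc
  have hmem : ∀ x : L, x ∈ L₀ ↔ ∃ y : L, x = c • y := fun x => Set.ext_iff.mp hL₀ x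
  -- the scaling maps
  set f : L →ₗ[ℤ_[p]] L := c • LinearMap.id with hf_def
  set g : L →ₗ[ℤ_[p]] L := (c * c) • LinearMap.id with hg_def
  have hfx : ∀ x : L, f x = c • x := fun x => rfl
  have hgx : ∀ x : L, g x = (c * c) • x := fun x => rfl
  have hg_inj : Function.Injective g := by
    intro a b hab
    exact smul_right_injective L hcc hab
  -- the pulled-back submodule has index `p^k` in `L`
  have hrange : f.toAddMonoidHom.range = L₀.toAddSubgroup := by
    ext x
    simp only [AddMonoidHom.mem_range, LinearMap.toAddMonoidHom_coe]
    constructor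
    · rintro ⟨y, rfl⟩
      exact (hmem _).2 ⟨y, (hfx y)⟩
    · intro hx
      obtain ⟨y, rfl⟩ := (hmem x).1 hx
      exact ⟨y, (hfx y).symm⟩
  have hidx'' : (Submodule.comap f M).toAddSubgroup.index = p ^ k := by
    have h1 : (Submodule.comap f M).toAddSubgroup
        = AddSubgroup.comap f.toAddMonoidHom M.toAddSubgroup := rfl
    rw [h1, AddSubgroup.index_comap, hrange]
    exact hidx
  have hspan := hMM (Submodule.comap f M) hidx''
  -- image computations
  have himg1 : g '' {z : L | ∃ x ∈ Submodule.comap f M, ∃ y ∈ Submodule.comap f M, z = ⁅x, y⁆}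
      = {z : L | ∃ x ∈ M, ∃ y ∈ M, z = ⁅x, y⁆} := by
    ext z
    constructor
    · rintro ⟨w, ⟨x, hx, y, hy, rfl⟩, rfl⟩
      refine ⟨c • x, hx, c • y, hy, ?_⟩
      rw [hgx, smul_lie, lie_smul, smul_smul]
    · rintro ⟨x, hx, y, hy, rfl⟩
      obtain ⟨x', hx'⟩ := (hmem x).1 (hML hx)
      obtain ⟨y', hy'⟩ := (hmem y).1 (hML hy)
      refine ⟨⁅x', y'⁆, ⟨x', by simpa [Submodule.mem_comap, hfx, ← hx'] using hx,
        y', by simpa [Submodule.mem_comap, hfx, ← hy'] using hy, rfl⟩, ?_⟩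
      rw [hgx, hx', hy', smul_lie, lie_smul, smul_smul]
  have himg2 : g '' {z : L | ∃ x y : L, z = ⁅x, y⁆}
      = {z : L | ∃ x ∈ L₀, ∃ y ∈ L₀, z = ⁅x, y⁆} := by
    ext z
    constructor
    · rintro ⟨w, ⟨x, y, rfl⟩, rfl⟩
      refine ⟨c • x, (hmem _).2 ⟨x, rfl⟩, c • y, (hmem _).2 ⟨y, rfl⟩, ?_⟩
      rw [hgx, smul_lie, lie_smul, smul_smul]
    · rintro ⟨x, hx, y, hy, rfl⟩
      obtain ⟨x', rfl⟩ := (hmem x).1 hx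
      obtain ⟨y', rfl⟩ := (hmem y).1 hy
      exact ⟨⁅x', y'⁆, ⟨x', y', rfl⟩, by rw [hgx, smul_lie, lie_smul, smul_smul]⟩
  -- the key equality of derived spans
  have hI : Submodule.span ℤ_[p] {z : L | ∃ x ∈ M, ∃ y ∈ M, z = ⁅x, y⁆}
      = Submodule.span ℤ_[p] {z : L | ∃ x ∈ L₀, ∃ y ∈ L₀, z = ⁅x, y⁆} := by
    calc Submodule.span ℤ_[p] {z : L | ∃ x ∈ M, ∃ y ∈ M, z = ⁅x, y⁆}
        = Submodule.span ℤ_[p]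
          (g '' {z : L | ∃ x ∈ Submodule.comap f M, ∃ y ∈ Submodule.comap f M, z = ⁅x, y⁆}) := by
          rw [himg1]
      _ = Submodule.map g (Submodule.span ℤ_[p]
          {z : L | ∃ x ∈ Submodule.comap f M, ∃ y ∈ Submodule.comap f M, z = ⁅x, y⁆}) :=
          (Submodule.map_span g _).symm
      _ = Submodule.map g (Submodule.span ℤ_[p] {z : L | ∃ x y : L, z = ⁅x, y⁆}) := by
          rw [hspan]
      _ = Submodule.span ℤ_[p] (g '' {z : L | ∃ x y : L, z = ⁅x, y⁆}) := Submodule.map_span g _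
      _ = Submodule.span ℤ_[p] {z : L | ∃ x ∈ L₀, ∃ y ∈ L₀, z = ⁅x, y⁆} := by rw [himg2]
  -- `L₀` is closed under brackets
  have hL₀br : ∀ a ∈ L₀, ∀ b ∈ L₀, ⁅a, b⁆ ∈ L₀ := by
    intro a ha b hb
    obtain ⟨a', rfl⟩ := (hmem a).1 ha
    obtain ⟨b', rfl⟩ := (hmem b).1 hb
    refine (hmem _).2 ⟨c • ⁅a', b'⁆, ?_⟩
    rw [smul_lie, lie_smul, smul_comm]
  -- `I ≤ M`
  have hIM : Submodule.span ℤ_[p] {z : L | ∃ x ∈ M, ∃ y ∈ M, z = ⁅x, y⁆} ≤ M := by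
    rw [Submodule.span_le]
    rintro z ⟨x, hx, y, hy, rfl⟩
    exact hMbr x hx y hy
  -- `I ≤ L₀`
  have hIL₀ : Submodule.span ℤ_[p] {z : L | ∃ x ∈ M, ∃ y ∈ M, z = ⁅x, y⁆} ≤ L₀ :=
    le_trans hIM hML
  -- `I` is an ideal of `L₀`
  have hIdeal : ∀ a ∈ L₀,
      ∀ b ∈ Submodule.span ℤ_[p] {z : L | ∃ x ∈ M, ∃ y ∈ M, z = ⁅x, y⁆},
      ⁅a, b⁆ ∈ Submodule.span ℤ_[p] {z : L | ∃ x ∈ M, ∃ y ∈ M, z = ⁅x, y⁆} := by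
    intro a ha b hb
    rw [hI] at hb ⊢
    induction hb using Submodule.span_induction with
    | mem z hz =>
      obtain ⟨x, hx, y, hy, rfl⟩ := hz
      exact Submodule.subset_span ⟨a, ha, ⁅x, y⁆, hL₀br x hx y hy, rfl⟩
    | zero => rw [lie_zero]; exact Submodule.zero_mem _
    | add x y _ _ hx hy => rw [lie_add]; exact Submodule.add_mem _ hx hy
    | smul r x _ hx => rw [lie_smul]; exact Submodule.smul_mem _ r hx
  -- `I ≠ ⊥`
  have hIne : Submodule.span ℤ_[p] {z : L | ∃ x ∈ M, ∃ y ∈ M, z = ⁅x, y⁆} ≠ ⊥ := by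
    intro hbot
    have hz : ⁅c • x₁, c • y₁⁆ ∈
        Submodule.span ℤ_[p] {z : L | ∃ x ∈ M, ∃ y ∈ M, z = ⁅x, y⁆} := by
      rw [hI]
      exact Submodule.subset_span ⟨c • x₁, (hmem _).2 ⟨x₁, rfl⟩, c • y₁, (hmem _).2 ⟨y₁, rfl⟩, rfl⟩
    rw [hbot, Submodule.mem_bot] at hz
    apply smul_ne_zero hcc hbr
    rw [← smul_smul, ← lie_smul, ← smul_lie]
    exact hz
  -- `I` is `φ`-invariant
  refine hsimple (Submodule.span ℤ_[p] {z : L | ∃ x ∈ M, ∃ y ∈ M, z = ⁅x, y⁆})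
    hIL₀ hIdeal hIne ⟨hIM, ?_⟩
  have key : ∀ z : L, ∀ _ : z ∈ Submodule.span ℤ_[p] {z : L | ∃ x ∈ M, ∃ y ∈ M, z = ⁅x, y⁆},
      ∀ hz' : z ∈ M,
      φ ⟨z, hz'⟩ ∈ Submodule.span ℤ_[p] {z : L | ∃ x ∈ M, ∃ y ∈ M, z = ⁅x, y⁆} := by
    intro z hz
    induction hz using Submodule.span_induction with
    | mem z hzs =>
      intro hz'
      obtain ⟨x, hx, y, hy, rfl⟩ := hzs
      have := hφbr ⟨x, hx⟩ ⟨y, hy⟩ hz'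
      rw [this, hI]
      exact Submodule.subset_span ⟨φ ⟨x, hx⟩, hφL _, φ ⟨y, hy⟩, hφL _, rfl⟩
    | zero =>
      intro h0
      have : (⟨0, h0⟩ : M) = 0 := Subtype.ext rfl
      rw [this, map_zero]
      exact Submodule.zero_mem _
    | add x y hxI hyI hx hy =>
      intro hxy
      have hxM : x ∈ M := hIM hxI
      have hyM : y ∈ M := hIM hyI
      have : (⟨x + y, hxy⟩ : M) = ⟨x, hxM⟩ + ⟨y, hyM⟩ := Subtype.ext rfl
      rw [this, map_add]
      exact Submodule.add_mem _ (hx hxM) (hy hyM)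
    | smul r x hxI hx =>
      intro hrx
      have hxM : x ∈ M := hIM hxI
      have : (⟨r • x, hrx⟩ : M) = r • ⟨x, hxM⟩ := Subtype.ext rfl
      rw [this, map_smul]
      exact Submodule.smul_mem _ r (hx hxM)
  intro x hx
  have := key x hx x.2
  simpa using this
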